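/- Let X = (X_d, d ∈ D(N)) be an exchangeable random network on a finite node set N. Define the dependence skeleton sk(X) to be the simple undirected graph with vertex set D(N) in which two distinct dyads d and e are NOT adjacent if and only if there exists some subset S ⊆ D(N)\{d,e} such that X_d and X_e are conditionally independent given (X_s, s ∈ S). Then sk(X) is one of the following four graphs: (a) the empty graph on D(N); (b) the incidence graph L(N); (c) the complement of the incidence graph L(N); (d) the complete graph on D(N). -/

import Mathlib

open MeasureTheory

/-- The type of dyads over a node set `V`: unordered pairs of distinct nodes. -/
abbrev Dyad (V : Type*) : Type _ := {d : Sym2 V // ¬ d.IsDiag}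

/-- The action of a permutation of the node set on dyads. -/
def dyadPerm {V : Type*} (π : Equiv.Perm V) (d : Dyad V) : Dyad V :=
  ⟨d.1.map π, by rw [Sym2.isDiag_map (Equiv.injective π)]; exact d.2⟩

/-- A random network `X = (X_d, d ∈ D(N))` is exchangeable if its joint distribution
is invariant under every relabeling of the node set. -/
def IsExchangeable {V Ω : Type*} [MeasurableSpace Ω] (μ : Measure Ω)
    (X : Dyad V → Ω → Bool) : Prop :=
  ∀ (π : Equiv.Perm V) (f : Dyad V → Bool),
    μ {ω | ∀ d : Dyad V, X (dyadPerm π d) ω = f d} = μ {ω | ∀ d : Dyad V, X d ω = f d}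

/-- `X_d` and `X_e` are conditionally independent given `(X_s, s ∈ S)`; for `S = ∅`
this is (unconditional) independence of `X_d` and `X_e`. -/
def CondIndepGiven {V Ω : Type*} [MeasurableSpace Ω] (μ : Measure Ω)
    (X : Dyad V → Ω → Bool) (d e : Dyad V) (S : Finset (Dyad V)) : Prop :=
  ∀ (a b : Bool) (g : Dyad V → Bool),
    μ {ω | X d ω = a ∧ X e ω = b ∧ ∀ s ∈ S, X s ω = g s} * μ {ω | ∀ s ∈ S, X s ω = g s}
      = μ {ω | X d ω = a ∧ ∀ s ∈ S, X s ω = g s} *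
          μ {ω | X e ω = b ∧ ∀ s ∈ S, X s ω = g s}

/-- Adjacency in the dependence skeleton `sk(X)`: two distinct dyads `d`, `e` are
adjacent iff there is NO subset `S ⊆ D(N) \ {d, e}` with `X_d ⫫ X_e | X_S`. -/
def SkelAdj {V Ω : Type*} [MeasurableSpace Ω] (μ : Measure Ω)
    (X : Dyad V → Ω → Bool) (d e : Dyad V) : Prop :=
  d ≠ e ∧ ¬ ∃ S : Finset (Dyad V), d ∉ S ∧ e ∉ S ∧ CondIndepGiven μ X d e S

/-- The incidence graph `L(N)`: two distinct dyads are adjacent iff they share a node. -/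
def incidenceGraph (V : Type*) : SimpleGraph (Dyad V) where
  Adj d e := d ≠ e ∧ ∃ i, i ∈ d.1 ∧ i ∈ e.1
  symm := ⟨by rintro d e ⟨hne, i, h1, h2⟩; exact ⟨hne.symm, i, h2, h1⟩⟩
  loopless := ⟨by rintro d ⟨hne, _⟩; exact hne rfl⟩


section Aux

set_option linter.unusedSectionVars false

variable {V Ω : Type*} [Fintype V] [DecidableEq V] [MeasurableSpace Ω]

lemma dyadPerm_inv_apply (π : Equiv.Perm V) (d : Dyad V) :
    dyadPerm π⁻¹ (dyadPerm π d) = d := by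
  apply Subtype.ext
  show Sym2.map ⇑π⁻¹ (Sym2.map ⇑π d.1) = d.1
  rw [Sym2.map_map]
  have h : (⇑π⁻¹ ∘ ⇑π) = id := funext fun x => π.symm_apply_apply x
  rw [h, Sym2.map_id, id_eq]

lemma measure_config_eq_sum (μ : Measure Ω) (Y : Dyad V → Ω → Bool)
    (hY : ∀ d, Measurable (Y d)) (P : (Dyad V → Bool) → Prop) [DecidablePred P] :
    μ {ω | P (fun d => Y d ω)}
      = ∑ f ∈ Finset.univ.filter (fun f => P f), μ {ω | ∀ d, Y d ω = f d} := by
  classical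
  have hset : {ω | P (fun d => Y d ω)}
      = ⋃ f ∈ Finset.univ.filter (fun f => P f), {ω | ∀ d, Y d ω = f d} := by
    ext ω
    simp only [Set.mem_setOf_eq, Set.mem_iUnion, Finset.mem_filter, Finset.mem_univ, true_and]
    constructor
    · intro h; exact ⟨fun d => Y d ω, h, fun d => rfl⟩
    · rintro ⟨f, hf, hfd⟩
      have : (fun d => Y d ω) = f := funext hfd
      rwa [this]
  rw [hset]
  refine measure_biUnion_finset ?_ ?_
  · intro f _ g _ hfg
    simp only [Function.onFun]
    rw [Set.disjoint_left]
    intro ω h1 h2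
    exact hfg (funext fun d => (h1 d).symm.trans (h2 d))
  · intro f _
    have : {ω | ∀ d, Y d ω = f d} = ⋂ d, (Y d) ⁻¹' {f d} := by
      ext ω; simp [Set.mem_iInter]
    rw [this]
    exact MeasurableSet.iInter fun d => hY d (measurableSet_singleton _)

lemma measure_perm_event {μ : Measure Ω} {X : Dyad V → Ω → Bool}
    (hmeas : ∀ d : Dyad V, Measurable (X d)) (hexch : IsExchangeable μ X)
    (π : Equiv.Perm V) (P : (Dyad V → Bool) → Prop) :
    μ {ω | P (fun d => X (dyadPerm π d) ω)} = μ {ω | P (fun d => X d ω)} := by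
  classical
  rw [measure_config_eq_sum μ (fun d => X (dyadPerm π d)) (fun d => hmeas _) P,
      measure_config_eq_sum μ X hmeas P]
  exact Finset.sum_congr rfl fun f _ => hexch π f

lemma condIndep_perm {μ : Measure Ω} {X : Dyad V → Ω → Bool}
    (hmeas : ∀ d : Dyad V, Measurable (X d)) (hexch : IsExchangeable μ X)
    (π : Equiv.Perm V) (d e : Dyad V) (S : Finset (Dyad V))
    (h : CondIndepGiven μ X d e S) :
    CondIndepGiven μ X (dyadPerm π d) (dyadPerm π e) (S.image (dyadPerm π)) := by
  classical
  intro a b g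
  have hforall : ∀ ω : Ω, (∀ s ∈ S.image (dyadPerm π), X s ω = g s)
      ↔ ∀ s ∈ S, X (dyadPerm π s) ω = g (dyadPerm π s) := by
    intro ω
    constructor
    · intro hh s hs; exact hh _ (Finset.mem_image_of_mem _ hs)
    · intro hh s hs
      obtain ⟨t, ht, rfl⟩ := Finset.mem_image.mp hs
      exact hh t ht
  have e1 : μ {ω | X (dyadPerm π d) ω = a ∧ X (dyadPerm π e) ω = b ∧
        ∀ s ∈ S.image (dyadPerm π), X s ω = g s}
      = μ {ω | X d ω = a ∧ X e ω = b ∧ ∀ s ∈ S, X s ω = g (dyadPerm π s)} := by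
    have := measure_perm_event hmeas hexch π
      (fun f => f d = a ∧ f e = b ∧ ∀ s ∈ S, f s = g (dyadPerm π s))
    rw [show {ω | X (dyadPerm π d) ω = a ∧ X (dyadPerm π e) ω = b ∧
        ∀ s ∈ S.image (dyadPerm π), X s ω = g s}
      = {ω | (fun f : Dyad V → Bool => f d = a ∧ f e = b ∧ ∀ s ∈ S, f s = g (dyadPerm π s))
          (fun t => X (dyadPerm π t) ω)} from by
        ext ω; simp only [Set.mem_setOf_eq]
        exact and_congr Iff.rfl (and_congr Iff.rfl (hforall ω))]
    exact this
  have e2 : μ {ω | ∀ s ∈ S.image (dyadPerm π), X s ω = g s}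
      = μ {ω | ∀ s ∈ S, X s ω = g (dyadPerm π s)} := by
    have := measure_perm_event hmeas hexch π
      (fun f => ∀ s ∈ S, f s = g (dyadPerm π s))
    rw [show {ω | ∀ s ∈ S.image (dyadPerm π), X s ω = g s}
      = {ω | (fun f : Dyad V → Bool => ∀ s ∈ S, f s = g (dyadPerm π s))
          (fun t => X (dyadPerm π t) ω)} from by
        ext ω; simp only [Set.mem_setOf_eq]; exact hforall ω]
    exact this
  have e3 : μ {ω | X (dyadPerm π d) ω = a ∧ ∀ s ∈ S.image (dyadPerm π), X s ω = g s}
      = μ {ω | X d ω = a ∧ ∀ s ∈ S, X s ω = g (dyadPerm π s)} := by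
    have := measure_perm_event hmeas hexch π
      (fun f => f d = a ∧ ∀ s ∈ S, f s = g (dyadPerm π s))
    rw [show {ω | X (dyadPerm π d) ω = a ∧ ∀ s ∈ S.image (dyadPerm π), X s ω = g s}
      = {ω | (fun f : Dyad V → Bool => f d = a ∧ ∀ s ∈ S, f s = g (dyadPerm π s))
          (fun t => X (dyadPerm π t) ω)} from by
        ext ω; simp only [Set.mem_setOf_eq]; exact and_congr Iff.rfl (hforall ω)]
    exact this
  have e4 : μ {ω | X (dyadPerm π e) ω = b ∧ ∀ s ∈ S.image (dyadPerm π), X s ω = g s}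
      = μ {ω | X e ω = b ∧ ∀ s ∈ S, X s ω = g (dyadPerm π s)} := by
    have := measure_perm_event hmeas hexch π
      (fun f => f e = b ∧ ∀ s ∈ S, f s = g (dyadPerm π s))
    rw [show {ω | X (dyadPerm π e) ω = b ∧ ∀ s ∈ S.image (dyadPerm π), X s ω = g s}
      = {ω | (fun f : Dyad V → Bool => f e = b ∧ ∀ s ∈ S, f s = g (dyadPerm π s))
          (fun t => X (dyadPerm π t) ω)} from by
        ext ω; simp only [Set.mem_setOf_eq]; exact and_congr Iff.rfl (hforall ω)]
    exact this
  rw [e1, e2, e3, e4]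
  exact h a b (fun s => g (dyadPerm π s))

lemma skelAdj_perm {μ : Measure Ω} {X : Dyad V → Ω → Bool}
    (hmeas : ∀ d : Dyad V, Measurable (X d)) (hexch : IsExchangeable μ X)
    (π : Equiv.Perm V) {d e : Dyad V} (h : SkelAdj μ X d e) :
    SkelAdj μ X (dyadPerm π d) (dyadPerm π e) := by
  classical
  obtain ⟨hne, hno⟩ := h
  constructor
  · intro hh
    apply hne
    have := congrArg (dyadPerm π⁻¹) hh
    rwa [dyadPerm_inv_apply, dyadPerm_inv_apply] at this
  · rintro ⟨S, hdS, heS, hCI⟩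
    apply hno
    refine ⟨S.image (dyadPerm π⁻¹), ?_, ?_, ?_⟩
    · intro hmem
      obtain ⟨t, ht, h2⟩ := Finset.mem_image.mp hmem
      apply hdS
      have : dyadPerm π d = t := by
        have := congrArg (dyadPerm π) h2
        rw [show dyadPerm π (dyadPerm π⁻¹ t) = t from by
          have := dyadPerm_inv_apply π⁻¹ t; rwa [inv_inv] at this] at this
        exact this.symm
      rwa [this]
    · intro hmem
      obtain ⟨t, ht, h2⟩ := Finset.mem_image.mp hmem
      apply heS
      have : dyadPerm π e = t := by
        have := congrArg (dyadPerm π) h2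
        rw [show dyadPerm π (dyadPerm π⁻¹ t) = t from by
          have := dyadPerm_inv_apply π⁻¹ t; rwa [inv_inv] at this] at this
        exact this.symm
      rwa [this]
    · have := condIndep_perm hmeas hexch π⁻¹ (dyadPerm π d) (dyadPerm π e) S hCI
      rwa [dyadPerm_inv_apply, dyadPerm_inv_apply] at this

lemma exists_perm_of_maps {n : ℕ} (a b : Fin n → V) (ha : Function.Injective a)
    (hb : Function.Injective b) : ∃ π : Equiv.Perm V, ∀ i, π (a i) = b i := by
  classical
  let e1 : Set.range a ≃ Set.range b :=
    (Equiv.ofInjective a ha).symm.trans (Equiv.ofInjective b hb)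
  have hc : Fintype.card ↥(Set.range a)ᶜ = Fintype.card ↥(Set.range b)ᶜ := by
    rw [Fintype.card_compl_set, Fintype.card_compl_set, Fintype.card_congr e1]
  let e2 : ↥(Set.range a)ᶜ ≃ ↥(Set.range b)ᶜ := Fintype.equivOfCardEq hc
  refine ⟨(Equiv.Set.sumCompl (Set.range a)).symm.trans ((e1.sumCongr e2).trans
    (Equiv.Set.sumCompl (Set.range b))), fun i => ?_⟩
  simp only [Equiv.trans_apply]
  rw [Equiv.Set.sumCompl_symm_apply_of_mem (Set.mem_range_self i)]
  have h1 : (⟨a i, Set.mem_range_self i⟩ : Set.range a) = Equiv.ofInjective a ha i := by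
    apply Subtype.ext; simp
  simp only [Equiv.sumCongr_apply, Sum.map_inl]
  rw [show e1 ⟨a i, Set.mem_range_self i⟩ = Equiv.ofInjective b hb i from by
    simp only [e1, Equiv.trans_apply, h1, Equiv.symm_apply_apply]]
  simp


lemma shared_rep (d e : Dyad V) (hde : d ≠ e) {x : V} (hxd : x ∈ d.1) (hxe : x ∈ e.1) :
    ∃ j k : V, x ≠ j ∧ x ≠ k ∧ j ≠ k ∧ d.1 = s(x, j) ∧ e.1 = s(x, k) := by
  obtain ⟨j, hj⟩ := Sym2.mem_iff_exists.mp hxd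
  obtain ⟨k, hk⟩ := Sym2.mem_iff_exists.mp hxe
  refine ⟨j, k, ?_, ?_, ?_, hj, hk⟩
  · rintro rfl; exact d.2 (by rw [hj]; exact Sym2.mk_isDiag_iff.mpr rfl)
  · rintro rfl; exact e.2 (by rw [hk]; exact Sym2.mk_isDiag_iff.mpr rfl)
  · rintro rfl; exact hde (Subtype.ext (hj.trans hk.symm))

lemma exists_perm_share (d₀ e₀ d e : Dyad V) (h₀ : d₀ ≠ e₀) (h : d ≠ e)
    (hs₀ : ∃ i, i ∈ d₀.1 ∧ i ∈ e₀.1) (hs : ∃ i, i ∈ d.1 ∧ i ∈ e.1) :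
    ∃ π : Equiv.Perm V, dyadPerm π d₀ = d ∧ dyadPerm π e₀ = e := by
  obtain ⟨x, hxd, hxe⟩ := hs₀
  obtain ⟨x', hxd', hxe'⟩ := hs
  obtain ⟨j, k, hxj, hxk, hjk, hd₀, he₀⟩ := shared_rep d₀ e₀ h₀ hxd hxe
  obtain ⟨j', k', hxj', hxk', hjk', hd, he⟩ := shared_rep d e h hxd' hxe'
  have ha : Function.Injective ![x, j, k] := by
    intro i i' hii'
    fin_cases i <;> fin_cases i' <;> simp_all
  have hb : Function.Injective ![x', j', k'] := by
    intro i i' hii'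
    fin_cases i <;> fin_cases i' <;> simp_all
  obtain ⟨π, hπ⟩ := exists_perm_of_maps _ _ ha hb
  have h0 : π x = x' := hπ 0
  have h1 : π j = j' := hπ 1
  have h2 : π k = k' := hπ 2
  refine ⟨π, ?_, ?_⟩
  · apply Subtype.ext
    show Sym2.map π d₀.1 = d.1
    rw [hd₀, hd, Sym2.map_pair_eq, h0, h1]
  · apply Subtype.ext
    show Sym2.map π e₀.1 = e.1
    rw [he₀, he, Sym2.map_pair_eq, h0, h2]

lemma sym2_rep (z : Sym2 V) : ∃ x y, z = s(x, y) := by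
  induction z using Sym2.ind with
  | _ x y => exact ⟨x, y, rfl⟩

lemma disjoint_rep (d e : Dyad V) (h : ¬ ∃ i, i ∈ d.1 ∧ i ∈ e.1) :
    ∃ x y z w : V, x ≠ y ∧ z ≠ w ∧ x ≠ z ∧ x ≠ w ∧ y ≠ z ∧ y ≠ w ∧
      d.1 = s(x, y) ∧ e.1 = s(z, w) := by
  obtain ⟨x, y, hxy⟩ := sym2_rep d.1
  obtain ⟨z, w, hzw⟩ := sym2_rep e.1
  have hmem : ∀ u, u ∈ d.1 → u ∈ e.1 → False := fun u h1 h2 => h ⟨u, h1, h2⟩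
  have hxmem : x ∈ d.1 := by rw [hxy]; exact Sym2.mem_iff.mpr (Or.inl rfl)
  have hymem : y ∈ d.1 := by rw [hxy]; exact Sym2.mem_iff.mpr (Or.inr rfl)
  have hzmem : z ∈ e.1 := by rw [hzw]; exact Sym2.mem_iff.mpr (Or.inl rfl)
  have hwmem : w ∈ e.1 := by rw [hzw]; exact Sym2.mem_iff.mpr (Or.inr rfl)
  refine ⟨x, y, z, w, ?_, ?_, ?_, ?_, ?_, ?_, hxy, hzw⟩
  · rintro rfl; exact d.2 (by rw [hxy]; exact Sym2.mk_isDiag_iff.mpr rfl)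
  · rintro rfl; exact e.2 (by rw [hzw]; exact Sym2.mk_isDiag_iff.mpr rfl)
  · rintro rfl; exact hmem x hxmem hzmem
  · rintro rfl; exact hmem x hxmem hwmem
  · rintro rfl; exact hmem y hymem hzmem
  · rintro rfl; exact hmem y hymem hwmem

lemma exists_perm_disjoint (d₀ e₀ d e : Dyad V)
    (hs₀ : ¬ ∃ i, i ∈ d₀.1 ∧ i ∈ e₀.1) (hs : ¬ ∃ i, i ∈ d.1 ∧ i ∈ e.1) :
    ∃ π : Equiv.Perm V, dyadPerm π d₀ = d ∧ dyadPerm π e₀ = e := by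
  obtain ⟨x, y, z, w, hxy, hzw, hxz, hxw, hyz, hyw, hd₀, he₀⟩ := disjoint_rep d₀ e₀ hs₀
  obtain ⟨x', y', z', w', hxy', hzw', hxz', hxw', hyz', hyw', hd, he⟩ := disjoint_rep d e hs
  have ha : Function.Injective ![x, y, z, w] := by
    intro i i' hii'
    fin_cases i <;> fin_cases i' <;> simp_all
  have hb : Function.Injective ![x', y', z', w'] := by
    intro i i' hii'
    fin_cases i <;> fin_cases i' <;> simp_all
  obtain ⟨π, hπ⟩ := exists_perm_of_maps _ _ ha hb
  have h0 : π x = x' := hπ 0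
  have h1 : π y = y' := hπ 1
  have h2 : π z = z' := hπ 2
  have h3 : π w = w' := hπ 3
  refine ⟨π, ?_, ?_⟩
  · apply Subtype.ext
    show Sym2.map π d₀.1 = d.1
    rw [hd₀, hd, Sym2.map_pair_eq, h0, h1]
  · apply Subtype.ext
    show Sym2.map π e₀.1 = e.1
    rw [he₀, he, Sym2.map_pair_eq, h2, h3]

end Aux

/-- The dependence skeleton of an exchangeable random network is the empty
graph, the incidence graph `L(N)`, the complement of `L(N)`, or the complete graph. -/
theorem stmt1 {V Ω : Type*} [Fintype V] [DecidableEq V] [MeasurableSpace Ω]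
    (μ : Measure Ω) [IsProbabilityMeasure μ] (X : Dyad V → Ω → Bool)
    (hmeas : ∀ d : Dyad V, Measurable (X d))
    (hexch : IsExchangeable μ X) :
    (∀ d e : Dyad V, ¬ SkelAdj μ X d e) ∨
    (∀ d e : Dyad V, SkelAdj μ X d e ↔ (incidenceGraph V).Adj d e) ∨
    (∀ d e : Dyad V, SkelAdj μ X d e ↔ ((incidenceGraph V)ᶜ).Adj d e) ∨
    (∀ d e : Dyad V, SkelAdj μ X d e ↔ d ≠ e) := by
  classical
  have transfer : ∀ d₀ e₀ d e : Dyad V, SkelAdj μ X d₀ e₀ →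
      (∃ π : Equiv.Perm V, dyadPerm π d₀ = d ∧ dyadPerm π e₀ = e) → SkelAdj μ X d e := by
    rintro d₀ e₀ d e h ⟨π, h1, h2⟩
    rw [← h1, ← h2]; exact skelAdj_perm hmeas hexch π h
  have hinc : ∀ d e : Dyad V, (incidenceGraph V).Adj d e ↔ (d ≠ e ∧ ∃ i, i ∈ d.1 ∧ i ∈ e.1) :=
    fun d e => Iff.rfl
  by_cases hS : ∃ d e : Dyad V, (incidenceGraph V).Adj d e ∧ SkelAdj μ X d e
  · by_cases hD : ∃ d e : Dyad V, ((incidenceGraph V)ᶜ).Adj d e ∧ SkelAdj μ X d e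
    · -- complete graph
      refine Or.inr (Or.inr (Or.inr fun d e => ⟨fun h => h.1, fun hne => ?_⟩))
      by_cases hsh : ∃ i, i ∈ d.1 ∧ i ∈ e.1
      · obtain ⟨d₀, e₀, hadj₀, hsk⟩ := hS
        exact transfer _ _ _ _ hsk
          (exists_perm_share d₀ e₀ d e hadj₀.1 hne hadj₀.2 hsh)
      · obtain ⟨d₀, e₀, hadj₀, hsk⟩ := hD
        have hne₀ : d₀ ≠ e₀ := hadj₀.1
        have hdis₀ : ¬ ∃ i, i ∈ d₀.1 ∧ i ∈ e₀.1 := fun hh => hadj₀.2 ⟨hne₀, hh⟩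
        exact transfer _ _ _ _ hsk (exists_perm_disjoint d₀ e₀ d e hdis₀ hsh)
    · -- incidence graph
      refine Or.inr (Or.inl fun d e => ⟨fun h => ?_, fun h => ?_⟩)
      · refine (hinc d e).mpr ⟨h.1, ?_⟩
        by_contra hsh
        exact hD ⟨d, e, (SimpleGraph.compl_adj _ _ _).mpr ⟨h.1, fun hadj => hsh hadj.2⟩, h⟩
      · obtain ⟨d₀, e₀, hadj₀, hsk⟩ := hS
        exact transfer _ _ _ _ hsk
          (exists_perm_share d₀ e₀ d e hadj₀.1 h.1 hadj₀.2 h.2)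
  · by_cases hD : ∃ d e : Dyad V, ((incidenceGraph V)ᶜ).Adj d e ∧ SkelAdj μ X d e
    · -- complement of incidence graph
      refine Or.inr (Or.inr (Or.inl fun d e => ⟨fun h => ?_, fun h => ?_⟩))
      · refine (SimpleGraph.compl_adj _ _ _).mpr ⟨h.1, fun hadj => hS ⟨d, e, hadj, h⟩⟩
      · obtain ⟨d₀, e₀, hadj₀, hsk⟩ := hD
        have hdis₀ : ¬ ∃ i, i ∈ d₀.1 ∧ i ∈ e₀.1 := fun hh => hadj₀.2 ⟨hadj₀.1, hh⟩
        have hdis : ¬ ∃ i, i ∈ d.1 ∧ i ∈ e.1 := fun hh => h.2 ⟨h.1, hh⟩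
        exact transfer _ _ _ _ hsk (exists_perm_disjoint d₀ e₀ d e hdis₀ hdis)
    · -- empty graph
      refine Or.inl fun d e h => ?_
      by_cases hsh : ∃ i, i ∈ d.1 ∧ i ∈ e.1
      · exact hS ⟨d, e, (hinc d e).mpr ⟨h.1, hsh⟩, h⟩
      · exact hD ⟨d, e, (SimpleGraph.compl_adj _ _ _).mpr ⟨h.1, fun hadj => hsh hadj.2⟩, h⟩
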